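/- Let 1 < γ < 2, B₀ ≠ 0, and fix ρ with 0 < ρ ≤ 1. With D(B) = (B² + B₀² - ρ^γ)² + 4B²ρ^γ and f(B) = ((B² + B₀² - ρ^γ) + √D(B))/B² for B ≠ 0, one has B² f(B)^{2/(2-γ)} - (2/(2-γ))·( B² - B₀² + ρ^γ + √D(B) )·f(B)^{γ/(2-γ)} ≤ f(B)^{γ/(2-γ)} · ( (B² + B₀² - ρ^γ) - √D(B) - 2(B² - B₀² + ρ^γ) ), and this right-hand side tends to -∞ as B → ∞ uniformly in ρ ∈ (0,1]. -/

import Mathlib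

noncomputable section

/-- the discriminant `D(ρ, B)` -/
def Dq (γ B₀ ρ B : ℝ) : ℝ :=
  (B ^ 2 + B₀ ^ 2 - ρ ^ γ) ^ 2 + 4 * B ^ 2 * ρ ^ γ

/-- the diagonalizing quantity `f(ρ, B)` (for `B ≠ 0`) -/
def fq (γ B₀ ρ B : ℝ) : ℝ :=
  ((B ^ 2 + B₀ ^ 2 - ρ ^ γ) + Real.sqrt (Dq γ B₀ ρ B)) / B ^ 2

/-- the right-hand side bound in Statement 15 -/
def rhs15 (γ B₀ ρ B : ℝ) : ℝ :=
  fq γ B₀ ρ B ^ (γ / (2 - γ)) *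
    ((B ^ 2 + B₀ ^ 2 - ρ ^ γ) - Real.sqrt (Dq γ B₀ ρ B)
      - 2 * (B ^ 2 - B₀ ^ 2 + ρ ^ γ))

set_option maxHeartbeats 1000000 in
theorem stmt_15 (γ B₀ : ℝ) (hγ1 : 1 < γ) (hγ2 : γ < 2) (hB₀ : B₀ ≠ 0) :
    (∀ ρ B : ℝ, 0 < ρ → ρ ≤ 1 → B ≠ 0 →
      B ^ 2 * fq γ B₀ ρ B ^ (2 / (2 - γ))
        - (2 / (2 - γ)) * (B ^ 2 - B₀ ^ 2 + ρ ^ γ + Real.sqrt (Dq γ B₀ ρ B))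
          * fq γ B₀ ρ B ^ (γ / (2 - γ))
        ≤ rhs15 γ B₀ ρ B)
    ∧ (∀ M : ℝ, ∃ B₁ : ℝ, ∀ B : ℝ, B₁ ≤ B → ∀ ρ : ℝ, 0 < ρ → ρ ≤ 1 →
        rhs15 γ B₀ ρ B < M) := by
  have h2γ : (0:ℝ) < 2 - γ := by linarith
  constructor
  · intro ρ B hρ hρ1 hB
    have hB2 : (0:ℝ) < B ^ 2 := by positivity
    have hργ : (0:ℝ) < ρ ^ γ := Real.rpow_pos_of_pos hρ γ
    set A : ℝ := B ^ 2 + B₀ ^ 2 - ρ ^ γ with hA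
    set S : ℝ := Real.sqrt (Dq γ B₀ ρ B) with hS
    set E : ℝ := B ^ 2 - B₀ ^ 2 + ρ ^ γ with hE
    have hDpos : 0 < Dq γ B₀ ρ B := by
      unfold Dq; positivity
    have hS2 : S ^ 2 = Dq γ B₀ ρ B := Real.sq_sqrt hDpos.le
    have hSA : |A| < S := by
      rw [hS, ← Real.sqrt_sq_eq_abs]
      apply Real.sqrt_lt_sqrt (by positivity)
      unfold Dq; rw [← hA]; nlinarith
    have hfpos : 0 < fq γ B₀ ρ B := by
      unfold fq
      rw [← hA, ← hS]
      have := abs_lt.mp hSA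
      apply div_pos (by linarith [this.1]) hB2
    have hSE : -E ≤ S := by
      have hEabs : |E| ≤ S := by
        rw [hS, ← Real.sqrt_sq_eq_abs]
        apply Real.sqrt_le_sqrt
        unfold Dq; rw [hE]; nlinarith [sq_nonneg (B * B₀)]
      linarith [abs_le.mp hEabs]
    -- exponent identity
    have hexp : (2:ℝ) / (2 - γ) = γ / (2 - γ) + 1 := by
      field_simp
      ring
    have hfq : fq γ B₀ ρ B ^ ((2:ℝ) / (2 - γ))
        = fq γ B₀ ρ B ^ (γ / (2 - γ)) * fq γ B₀ ρ B := by
      rw [hexp, Real.rpow_add hfpos, Real.rpow_one]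
    have hBf : B ^ 2 * fq γ B₀ ρ B = A + S := by
      unfold fq; rw [← hA, ← hS]; field_simp
    have hq0 : (0:ℝ) ≤ fq γ B₀ ρ B ^ (γ / (2 - γ)) :=
      (Real.rpow_pos_of_pos hfpos _).le
    have hc : (2:ℝ) ≤ 2 / (2 - γ) := by
      rw [le_div_iff₀ h2γ]; nlinarith
    unfold rhs15
    rw [← hA, ← hS, ← hE, hfq]
    have key : 0 ≤ fq γ B₀ ρ B ^ (γ / (2 - γ)) * ((2 / (2 - γ) - 2) * (E + S)) := by
      apply mul_nonneg hq0
      apply mul_nonneg (by linarith) (by linarith)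
    nlinarith [hBf, key]
  · intro M
    refine ⟨Real.sqrt (max 2 (B₀ ^ 2 + max 0 (-M / 2) + 1)), fun B hB ρ hρ hρ1 => ?_⟩
    have h0 : (0:ℝ) ≤ max 2 (B₀ ^ 2 + max 0 (-M / 2) + 1) :=
      le_trans (by norm_num) (le_max_left _ _)
    have hBnn : 0 ≤ B := le_trans (Real.sqrt_nonneg _) hB
    have hB2big : max 2 (B₀ ^ 2 + max 0 (-M / 2) + 1) ≤ B ^ 2 := by
      rw [← Real.sq_sqrt h0]
      exact pow_le_pow_left₀ (Real.sqrt_nonneg _) hB 2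
    have h2 : (2:ℝ) ≤ B ^ 2 := le_trans (le_max_left _ _) hB2big
    have hBB : B₀ ^ 2 + max 0 (-M / 2) + 1 ≤ B ^ 2 := le_trans (le_max_right _ _) hB2big
    have hB2 : (0:ℝ) < B ^ 2 := by linarith
    have hργ : (0:ℝ) < ρ ^ γ := Real.rpow_pos_of_pos hρ γ
    have hργ1 : ρ ^ γ ≤ 1 := Real.rpow_le_one hρ.le hρ1 (by linarith)
    set A : ℝ := B ^ 2 + B₀ ^ 2 - ρ ^ γ with hA
    set S : ℝ := Real.sqrt (Dq γ B₀ ρ B) with hS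
    set E : ℝ := B ^ 2 - B₀ ^ 2 + ρ ^ γ with hE
    have hA1 : 1 ≤ A := by rw [hA]; nlinarith [sq_nonneg B₀]
    have hAS : A ≤ S := by
      rw [hS]
      calc A = Real.sqrt (A ^ 2) := (Real.sqrt_sq (by linarith)).symm
        _ ≤ _ := by
            apply Real.sqrt_le_sqrt
            unfold Dq; rw [← hA]; nlinarith [mul_pos hB2 hργ]
    have hf1 : 1 ≤ fq γ B₀ ρ B := by
      unfold fq; rw [← hA, ← hS, le_div_iff₀ hB2, one_mul]
      nlinarith [sq_nonneg B₀]
    have hq0 : (0:ℝ) ≤ γ / (2 - γ) := by positivity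
    have hfq1 : 1 ≤ fq γ B₀ ρ B ^ (γ / (2 - γ)) := by
      calc (1:ℝ) = 1 ^ (γ / (2 - γ)) := (Real.one_rpow _).symm
        _ ≤ _ := Real.rpow_le_rpow (by norm_num) hf1 hq0
    have hX : A - S - 2 * E ≤ -2 * (max 0 (-M / 2) + 1) := by
      rw [hE]; linarith
    have hXneg : A - S - 2 * E ≤ 0 := by
      have : (0:ℝ) ≤ max 0 (-M / 2) := le_max_left _ _
      linarith
    unfold rhs15
    rw [← hA, ← hS, ← hE]
    calc fq γ B₀ ρ B ^ (γ / (2 - γ)) * (A - S - 2 * E)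
        ≤ 1 * (A - S - 2 * E) := mul_le_mul_of_nonpos_right hfq1 hXneg
      _ = A - S - 2 * E := one_mul _
      _ ≤ -2 * (max 0 (-M / 2) + 1) := hX
      _ < M := by
          have : -M / 2 ≤ max 0 (-M / 2) := le_max_right _ _
          linarith

end
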